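/- Let k be a field and A a finite-dimensional commutative k-algebra, and let e ∈ A be an idempotent. If (A, Ae) is a cover of eAe (i.e. of End_A(Ae)^op, which is canonically isomorphic to eAe), then A is isomorphic to eAe as a k-algebra. -/

import Mathlib

universe u

open MulOpposite

set_option synthInstance.maxHeartbeats 400000
set_option maxHeartbeats 1000000

/-- `(A, P)` is a cover of `B = End_A(P)ᵒᵖ`: the Schur functor `Hom_A(P, -)` is fully
faithful on finitely generated projective `A`-modules.  Here a map
`Φ : Hom_A(P, M) → Hom_A(P, N)` is `B`-linear iff it is additive and commutes with
precomposition by every `A`-endomorphism of `P`, so the condition says that for all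
finitely generated projective `M`, `N` the natural map
`Hom_A(M, N) → Hom_B(Hom_A(P, M), Hom_A(P, N))`, `g ↦ (f ↦ g ∘ f)`, is bijective. -/
def IsCover (A : Type u) [Ring A] (P : Type u) [AddCommGroup P] [Module A P] : Prop :=
  ∀ (M N : Type u) [AddCommGroup M] [Module A M] [AddCommGroup N] [Module A N],
    Module.Finite A M → Module.Projective A M →
    Module.Finite A N → Module.Projective A N →
    (Function.Injective fun (g : M →ₗ[A] N) => fun f : P →ₗ[A] M => g ∘ₗ f) ∧
    (∀ Φ : (P →ₗ[A] M) → (P →ₗ[A] N),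
      (∀ f₁ f₂, Φ (f₁ + f₂) = Φ f₁ + Φ f₂) →
      (∀ (f : P →ₗ[A] M) (g : P →ₗ[A] P), Φ (f ∘ₗ g) = Φ f ∘ₗ g) →
      ∃ g : M →ₗ[A] N, ∀ f, Φ f = g ∘ₗ f)

/-- `Ae` as a left `A`-submodule of `A` (for an idempotent `e` this is the projective
left module `Ae`, realized as `{x : A | x * e = x}`). -/
def AeSub (A : Type u) [Ring A] (e : A) : Submodule A A where
  carrier := {x | x * e = x}
  add_mem' := by
    intro a b ha hb
    simp only [Set.mem_setOf_eq] at *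
    rw [add_mul, ha, hb]
  zero_mem' := by simp
  smul_mem' := by
    intro c x hx
    simp only [Set.mem_setOf_eq, smul_eq_mul] at *
    rw [mul_assoc, hx]

/-- The additive subgroup `eAe` of `A`, for an idempotent `e`. -/
def cornerAddSubgroup (A : Type u) [Ring A] (e : {x : A // x * x = x}) : AddSubgroup A where
  carrier := {x | e.1 * x * e.1 = x}
  add_mem' := by
    intro a b ha hb
    simp only [Set.mem_setOf_eq] at *
    rw [mul_add, add_mul, ha, hb]
  zero_mem' := by simp
  neg_mem' := by
    intro x hx
    simp only [Set.mem_setOf_eq] at *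
    rw [mul_neg, neg_mul, hx]

/-- The corner ring `eAe` of `A` at an idempotent `e`; its multiplicative identity is `e`. -/
def Corner (A : Type u) [Ring A] (e : {x : A // x * x = x}) : Type u :=
  ↥(cornerAddSubgroup A e)

namespace Corner
variable {A : Type u} [Ring A] (e : {x : A // x * x = x})

lemma eq_self (x : Corner A e) : e.1 * x.1 * e.1 = x.1 := x.2

lemma e_mul (x : Corner A e) : e.1 * x.1 = x.1 := by
  conv_lhs => rw [← eq_self e x]
  rw [← mul_assoc, ← mul_assoc, e.2, eq_self e x]

lemma mul_e (x : Corner A e) : x.1 * e.1 = x.1 := by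
  conv_lhs => rw [← eq_self e x]
  rw [mul_assoc, e.2, eq_self e x]

instance : AddCommGroup (Corner A e) :=
  inferInstanceAs (AddCommGroup ↥(cornerAddSubgroup A e))

instance : Mul (Corner A e) :=
  ⟨fun x y => ⟨x.1 * y.1, by
    show e.1 * (x.1 * y.1) * e.1 = x.1 * y.1
    rw [mul_assoc, mul_assoc, mul_e e y, ← mul_assoc, e_mul e x]⟩⟩

instance : One (Corner A e) := ⟨⟨e.1, by show e.1 * e.1 * e.1 = e.1; rw [e.2, e.2]⟩⟩

/-- `eAe` is a ring with identity `e`. -/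
instance : Ring (Corner A e) :=
  { (inferInstanceAs (AddCommGroup (Corner A e)) : AddCommGroup (Corner A e)) with
    mul := (· * ·)
    one := 1
    mul_assoc := fun x y z => Subtype.ext (mul_assoc x.1 y.1 z.1)
    one_mul := fun x => Subtype.ext (e_mul e x)
    mul_one := fun x => Subtype.ext (mul_e e x)
    left_distrib := fun x y z => Subtype.ext (mul_add x.1 y.1 z.1)
    right_distrib := fun x y z => Subtype.ext (add_mul x.1 y.1 z.1)
    zero_mul := fun x => Subtype.ext (zero_mul x.1)
    mul_zero := fun x => Subtype.ext (mul_zero x.1) }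

end Corner

section
variable (k : Type u) [Field k] (A : Type u) [CommRing A] [Algebra k A]

instance (e : {x : A // x * x = x}) : SMul k (Corner A e) :=
  ⟨fun c x => ⟨c • x.1, by
    show e.1 * (c • x.1) * e.1 = c • x.1
    rw [mul_smul_comm, smul_mul_assoc, x.2]⟩⟩

variable {A' : Type u} [CommRing A']

/-- projection `A → Ax` for an idempotent `x`. -/
def aeProj (x : A') (hx : x * x = x) : A' →ₗ[A'] ↥(AeSub A' x) where
  toFun a := ⟨a * x, by simp [AeSub, mul_assoc, hx]⟩
  map_add' a b := by ext; simp [add_mul]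
  map_smul' c a := by ext; simp [mul_assoc]

lemma aeSub_finite (x : A') (hx : x * x = x) : Module.Finite A' ↥(AeSub A' x) := by
  rw [Module.Finite.iff_fg]
  refine ⟨{x}, le_antisymm ?_ ?_⟩
  · rw [Submodule.span_le]
    intro a ha
    simp only [Finset.coe_singleton, Set.mem_singleton_iff] at ha
    subst ha
    exact hx
  · intro a ha
    have : a = a • x := by
      simpa [smul_eq_mul] using ha.symm
    rw [this]
    exact Submodule.smul_mem _ _ (Submodule.subset_span (by simp))

lemma aeSub_projective (x : A') (hx : x * x = x) : Module.Projective A' ↥(AeSub A' x) := by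
  refine Module.Projective.of_split (AeSub A' x).subtype (aeProj x hx) ?_
  refine LinearMap.ext fun a => Subtype.ext ?_
  exact a.2

/-- In a commutative ring every `A`-linear map `Ae → A(1-e)` is zero. -/
lemma hom_ae_zero (e : A') (he : e * e = e)
    (f : ↥(AeSub A' e) →ₗ[A'] ↥(AeSub A' (1 - e))) : f = 0 := by
  have hev : (f ⟨e, he⟩ : A') = 0 := by
    have h1 : e • f ⟨e, he⟩ = f ⟨e, he⟩ := by
      rw [← f.map_smul]
      congr 1
      exact Subtype.ext (by simp [smul_eq_mul, he])
    have h2 : (f ⟨e, he⟩ : A') * (1 - e) = (f ⟨e, he⟩ : A') := (f ⟨e, he⟩).2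
    have h3 : e * (f ⟨e, he⟩ : A') = (f ⟨e, he⟩ : A') := by
      conv_rhs => rw [← h1]
      simp [smul_eq_mul]
    rw [mul_sub, mul_one] at h2
    have h4 : (f ⟨e, he⟩ : A') * e = 0 := sub_eq_self.mp h2
    calc (f ⟨e, he⟩ : A') = e * (f ⟨e, he⟩ : A') := h3.symm
      _ = (f ⟨e, he⟩ : A') * e := mul_comm _ _
      _ = 0 := h4
  refine LinearMap.ext fun a => ?_
  have ha : a = (a : A') • (⟨e, he⟩ : ↥(AeSub A' e)) := by
    exact Subtype.ext (by simpa [smul_eq_mul] using a.2.symm)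
  conv_lhs => rw [ha, f.map_smul]
  exact Subtype.ext (by simp [smul_eq_mul, hev])

/-- If `A` is a finite-dimensional commutative `k`-algebra, `e ∈ A` is an idempotent
and `(A, Ae)` is a cover of `eAe` (i.e. of `End_A(Ae)ᵒᵖ`), then `A ≅ eAe` as
`k`-algebras (a `k`-linear ring isomorphism). -/
theorem commutative_cover_iso
    [FiniteDimensional k A] (e : A) (he : e * e = e)
    (hcover : IsCover A ↥(AeSub A e)) :
    ∃ φ : A ≃+* Corner A ⟨e, he⟩, ∀ (c : k) (a : A), φ (c • a) = c • φ a := by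
  have hf : (1 - e) * (1 - e) = 1 - e := by
    rw [sub_mul, one_mul, mul_sub, mul_one, he]; ring
  have hM := hcover ↥(AeSub A (1 - e)) ↥(AeSub A (1 - e))
    (aeSub_finite _ hf) (aeSub_projective _ hf) (aeSub_finite _ hf) (aeSub_projective _ hf)
  -- injectivity forces `id = 0` on `A(1-e)`.
  have hid : (LinearMap.id : ↥(AeSub A (1 - e)) →ₗ[A] ↥(AeSub A (1 - e))) = 0 := by
    apply hM.1
    funext f
    rw [hom_ae_zero e he f]
    simp
  have he1 : e = 1 := by
    have h0 : ((1 : A) - e) ∈ AeSub A (1 - e) := hf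
    have := congrFun (congrArg (fun g => g.toFun) hid) ⟨1 - e, h0⟩
    have h1 : (1 : A) - e = 0 := congrArg Subtype.val this
    exact (sub_eq_zero.mp h1).symm
  subst he1
  refine ⟨{ toFun := fun a => ⟨a, by show (1:A) * a * 1 = a; simp⟩
            invFun := fun x => x.1
            left_inv := fun a => rfl
            right_inv := fun x => Subtype.ext rfl
            map_mul' := fun a b => rfl
            map_add' := fun a b => rfl }, fun c a => rfl⟩
end
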